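/- Let 0 < x < 1, 0 < r < 1, and θ ∈ ℝ. Let n₂ := (1/x, 0, 1) and n₃ := (1/x, r·e^{iθ}/√(1−r²), 1/√(1−r²)) in ℂ³ (the polar vectors of the complex line L₂ at distance d from L₁ = {(0,w)}, where x = tanh(d/2), and of its image g(L₂) under the normalized loxodromic isometry g stabilizing L₁ with trivial holonomy translating the origin to r·e^{iθ}). Then |⟨n₂,n₃⟩|² < ⟨n₂,n₂⟩·⟨n₃,n₃⟩ (i.e., L₂ and g(L₂) intersect) if and only if r < 2√(1−x²)/(2−x²). -/

import Mathlib

open Complex Real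

/-- The signature `(2,1)` Hermitian form on `ℂ³`. -/
noncomputable def herm (p q : ℂ × ℂ × ℂ) : ℂ :=
  p.1 * (starRingEnd ℂ) q.1 + p.2.1 * (starRingEnd ℂ) q.2.1 - p.2.2 * (starRingEnd ℂ) q.2.2

set_option maxHeartbeats 1000000 in
/-- Trivial holonomy: the translate `g(L₂)` of the complex line `L₂` under a normalized
loxodromic with trivial holonomy meets `L₂` iff the translation radius `r` satisfies
`r < 2√(1−x²)/(2−x²)`. -/
theorem trivial_holonomy_intersection_criterion
    (x r θ : ℝ) (hx0 : 0 < x) (hx1 : x < 1) (hr0 : 0 < r) (hr1 : r < 1)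
    (n₂ n₃ : ℂ × ℂ × ℂ)
    (hn₂ : n₂ = (((1 / x : ℝ) : ℂ), 0, 1))
    (hn₃ : n₃ = (((1 / x : ℝ) : ℂ),
      (r : ℂ) * Complex.exp (θ * Complex.I) / ((Real.sqrt (1 - r ^ 2) : ℝ) : ℂ),
      1 / ((Real.sqrt (1 - r ^ 2) : ℝ) : ℂ))) :
    ‖herm n₂ n₃‖ ^ 2 < (herm n₂ n₂).re * (herm n₃ n₃).re ↔
      r < 2 * Real.sqrt (1 - x ^ 2) / (2 - x ^ 2) := by
  have hr2 : (0:ℝ) < 1 - r^2 := by nlinarith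
  have hx2 : (0:ℝ) < 1 - x^2 := by nlinarith
  set s := Real.sqrt (1 - r^2) with hsdef
  set t := Real.sqrt (1 - x^2) with htdef
  have hs0 : 0 < s := Real.sqrt_pos.mpr hr2
  have ht0 : 0 < t := Real.sqrt_pos.mpr hx2
  have hs2 : s^2 = 1 - r^2 := Real.sq_sqrt hr2.le
  have ht2 : t^2 = 1 - x^2 := Real.sq_sqrt hx2.le
  clear_value s t
  have hs1 : s < 1 := by nlinarith
  have hsne : (s:ℂ) ≠ 0 := by exact_mod_cast hs0.ne'
  have hxne : x ≠ 0 := hx0.ne'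
  have hsne' : s ≠ 0 := hs0.ne'
  have hxx : (0:ℝ) < x^2 := by positivity
  have hAB : (0:ℝ) < 2 - x^2 := by nlinarith
  have h1 : herm n₂ n₃ = ((1/x^2 - 1/s : ℝ) : ℂ) := by
    simp [herm, hn₂, hn₃, Complex.conj_ofReal, map_div₀]
    ring
  have h2 : herm n₂ n₂ = ((1/x^2 - 1 : ℝ) : ℂ) := by
    simp [herm, hn₂, Complex.conj_ofReal]
    push_cast
    ring
  have hnsq : Complex.normSq ((r : ℂ) * Complex.exp (θ * Complex.I) / (s:ℂ)) = r^2/s^2 := by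
    rw [Complex.normSq_div, Complex.normSq_mul, Complex.normSq_eq_norm_sq (Complex.exp _),
      Complex.norm_exp_ofReal_mul_I, Complex.normSq_ofReal, Complex.normSq_ofReal]
    ring
  have hrs : (r:ℂ)^2 = 1 - (s:ℂ)^2 := by
    have h : (r:ℝ)^2 = 1 - s^2 := by linarith [hs2]
    exact_mod_cast congrArg (Complex.ofReal) h
  have h3 : herm n₃ n₃ = ((1/x^2 - 1 : ℝ) : ℂ) := by
    simp only [herm, hn₃, Complex.mul_conj, hnsq]
    simp [Complex.conj_ofReal, map_div₀, Complex.normSq_ofReal]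
    rw [hrs]
    field_simp
    ring
  rw [h1, h2, h3]
  simp only [Complex.norm_real, Real.norm_eq_abs, Complex.ofReal_re]
  rw [_root_.sq_abs]
  have hc : (0:ℝ) < (s*x^2)^2 := by positivity
  have hA2 : (1/x^2 - 1/s)^2 * (s*x^2)^2 = (s - x^2)^2 := by
    have e : (1/x^2 - 1/s) = (s - x^2)/(s*x^2) := by
      field_simp
    rw [e, div_pow, div_mul_cancel₀ _ hc.ne']
  have hB2 : ((1/x^2 - 1)*(1/x^2-1)) * (s*x^2)^2 = (s - s*x^2)^2 := by
    have e : (1/x^2 - 1) = (s - s*x^2)/(s*x^2) := by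
      field_simp
    rw [e, ← pow_two, div_pow, div_mul_cancel₀ _ hc.ne']
  have hiff : (1/x^2 - 1/s)^2 < (1/x^2-1) * (1/x^2-1) ↔ (s - x^2)^2 < (s - s*x^2)^2 := by
    rw [← hA2, ← hB2, mul_lt_mul_iff_of_pos_right hc]
  rw [hiff, lt_div_iff₀ hAB]
  constructor
  · intro h
    have hkey : x^2 < s*(2 - x^2) := by
      nlinarith [h, mul_pos hxx (by linarith : (0:ℝ) < 1 - s)]
    have h5 : (x^2)^2 < (s*(2-x^2))^2 := by nlinarith [hkey, hxx]
    have h6 : (r*(2-x^2))^2 < (2*t)^2 := by nlinarith [h5, hs2, ht2, sq_nonneg (2-x^2)]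
    exact lt_of_pow_lt_pow_left₀ 2 (by positivity) h6
  · intro h
    have h6 : (r*(2-x^2))^2 < (2*t)^2 := by nlinarith [h, mul_pos hr0 hAB, ht0]
    have h5 : (x^2)^2 < (s*(2-x^2))^2 := by nlinarith [h6, hs2, ht2, sq_nonneg (2-x^2)]
    have hkey : x^2 < s*(2-x^2) := lt_of_pow_lt_pow_left₀ 2 (by positivity) h5
    nlinarith [mul_pos (mul_pos hxx (by linarith : (0:ℝ) < 1 - s))
      (by linarith : (0:ℝ) < s*(2-x^2) - x^2)]
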